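/- arXiv:1309.1840 — 3 statements merged into one kernel-verified Lean document; each statement's English description precedes it below -/
import Mathlib

section
/- Let $\mu_1,\ldots,\mu_n$ be real numbers with $\sum_i \mu_i = 0$ and $\sum_i \mu_i^2 = B^2$ where $B \geq 0$. Then $\left|\sum_i \mu_i^3\right| \leq \frac{n-2}{\sqrt{n(n-1)}} B^3$. -/
lemma okumura_coord (n : ℕ) (hn : 2 ≤ n) (μ : Fin n → ℝ) (B : ℝ)
    (h1 : ∑ i, μ i = 0) (h2 : ∑ i, (μ i) ^ 2 = B ^ 2) (i : Fin n) :
    (n : ℝ) * (μ i) ^ 2 ≤ ((n : ℝ) - 1) * B ^ 2 := by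
  have hsum : ∑ j ∈ Finset.univ.erase i, μ j = -μ i := by
    have := Finset.add_sum_erase Finset.univ μ (Finset.mem_univ i)
    linarith
  have hsq : ∑ j ∈ Finset.univ.erase i, (μ j) ^ 2 = B ^ 2 - (μ i) ^ 2 := by
    have := Finset.add_sum_erase Finset.univ (fun j => (μ j) ^ 2) (Finset.mem_univ i)
    linarith
  have hcs := sq_sum_le_card_mul_sum_sq (s := Finset.univ.erase i) (f := μ)
  rw [hsum, hsq, Finset.card_erase_of_mem (Finset.mem_univ i), Finset.card_univ,
    Fintype.card_fin] at hcs
  have hn1 : (1:ℝ) ≤ (n:ℝ) := by exact_mod_cast Nat.one_le_of_lt hn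
  have hcast : ((n - 1 : ℕ) : ℝ) = (n : ℝ) - 1 := by
    have : 1 ≤ n := by omega
    push_cast [this]; ring
  rw [hcast] at hcs
  nlinarith [hcs]

lemma okumura_lower (n : ℕ) (hn : 2 ≤ n) (μ : Fin n → ℝ) (B : ℝ) (hB : 0 ≤ B)
    (h1 : ∑ i, μ i = 0) (h2 : ∑ i, (μ i) ^ 2 = B ^ 2) :
    -(((n : ℝ) - 2) / Real.sqrt ((n : ℝ) * ((n : ℝ) - 1)) * B ^ 3) ≤ ∑ i, (μ i) ^ 3 := by
  have hn2 : (2:ℝ) ≤ (n:ℝ) := by exact_mod_cast hn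
  set s : ℝ := Real.sqrt ((n : ℝ) * ((n : ℝ) - 1)) with hs_def
  have hprod : (0:ℝ) < (n:ℝ) * ((n:ℝ) - 1) := by nlinarith
  have hs : 0 < s := Real.sqrt_pos.mpr hprod
  have hs2 : s ^ 2 = (n:ℝ) * ((n:ℝ) - 1) := Real.sq_sqrt hprod.le
  set a : ℝ := B / s with ha_def
  have ha : 0 ≤ a := div_nonneg hB hs.le
  have has : a * s = B := div_mul_cancel₀ B hs.ne'
  have hterm : ∀ i, 0 ≤ μ i + ((n:ℝ) - 1) * a := by
    intro i
    have hco := okumura_coord n hn μ B h1 h2 i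
    rcases le_or_gt 0 (μ i) with h | h
    · nlinarith
    · -- (-μ i) * s ≤ (n-1) * B
      have key : (-μ i) * s ≤ ((n:ℝ) - 1) * B := by
        have h1' : ((-μ i) * s) ^ 2 ≤ (((n:ℝ) - 1) * B) ^ 2 := by
          have := mul_le_mul_of_nonneg_left hco (by linarith : (0:ℝ) ≤ (n:ℝ) - 1)
          nlinarith [hs2]
        have hxy : 0 < (-μ i) * s + ((n:ℝ) - 1) * B := by
          have := mul_pos (neg_pos.mpr h) hs
          nlinarith [mul_nonneg (by linarith : (0:ℝ) ≤ (n:ℝ) - 1) hB]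
        nlinarith [h1', hxy]
      nlinarith [key, has, hs]
  have key : 0 ≤ ∑ i, (μ i - a) ^ 2 * (μ i + ((n:ℝ) - 1) * a) :=
    Finset.sum_nonneg fun i _ => mul_nonneg (sq_nonneg _) (hterm i)
  have expand : ∑ i, (μ i - a) ^ 2 * (μ i + ((n:ℝ) - 1) * a)
      = (∑ i, (μ i) ^ 3) + ((n:ℝ) - 3) * a * B ^ 2 + (3 - 2 * (n:ℝ)) * a ^ 2 * 0
        + (n:ℝ) * (((n:ℝ) - 1) * a ^ 3) := by
    rw [← h1, ← h2]
    rw [Finset.mul_sum, Finset.mul_sum]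
    rw [← Finset.sum_add_distrib, ← Finset.sum_add_distrib]
    have : (n:ℝ) * (((n:ℝ) - 1) * a ^ 3) = ∑ _i : Fin n, ((n:ℝ) - 1) * a ^ 3 := by
      rw [Finset.sum_const, Finset.card_univ, Fintype.card_fin, nsmul_eq_mul]
    rw [this, ← Finset.sum_add_distrib]
    exact Finset.sum_congr rfl fun i _ => by ring
  rw [expand] at key
  have hval : ((n:ℝ) - 3) * a * B ^ 2 + (n:ℝ) * (((n:ℝ) - 1) * a ^ 3)
      = ((n:ℝ) - 2) / s * B ^ 3 := by
    have hB3 : a ^ 3 * ((n:ℝ) * ((n:ℝ) - 1)) = a * B ^ 2 := by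
      rw [← hs2]; linear_combination (a ^ 2 * s + a * B) * has
    rw [div_mul_eq_mul_div, eq_div_iff hs.ne']
    linear_combination s * hB3 + ((n:ℝ) - 2) * B ^ 2 * has
  linarith [key, hval]

theorem okumura (n : ℕ) (hn : 2 ≤ n) (μ : Fin n → ℝ) (B : ℝ) (hB : 0 ≤ B)
    (h1 : ∑ i, μ i = 0) (h2 : ∑ i, (μ i) ^ 2 = B ^ 2) :
    |∑ i, (μ i) ^ 3| ≤ ((n : ℝ) - 2) / Real.sqrt ((n : ℝ) * ((n : ℝ) - 1)) * B ^ 3 := by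
  rw [abs_le]
  constructor
  · exact okumura_lower n hn μ B hB h1 h2
  · have h1' : ∑ i, (-μ i) = 0 := by simp [h1]
    have h2' : ∑ i, (-μ i) ^ 2 = B ^ 2 := by simpa using h2
    have := okumura_lower n hn (fun i => -μ i) B hB h1' h2'
    have hneg : ∑ i, (-μ i) ^ 3 = -∑ i, (μ i) ^ 3 := by
      rw [← Finset.sum_neg_distrib]
      exact Finset.sum_congr rfl fun i _ => by ring
    rw [hneg] at this
    linarith
end

section
/- Let $\mu_1,\ldots,\mu_n$ be real numbers with $\sum_i \mu_i = 0$ and $\sum_i \mu_i^2 = B^2$ where $B \geq 0$. If $\left|\sum_i \mu_i^3\right| = \frac{n-2}{\sqrt{n(n-1)}} B^3$, then at least $n-1$ of the $\mu_i$ are equal. -/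
open Finset

lemma okumura_aux (n : ℕ) (hn : 3 ≤ n) (μ : Fin n → ℝ) (B : ℝ) (hB : 0 < B)
    (h1 : ∑ i, μ i = 0) (h2 : ∑ i, (μ i) ^ 2 = B ^ 2)
    (heq : ∑ i, (μ i) ^ 3 = ((n : ℝ) - 2) / Real.sqrt ((n : ℝ) * ((n : ℝ) - 1)) * B ^ 3) :
    ∃ x : ℝ, n - 1 ≤ (Finset.univ.filter (fun i => μ i = x)).card := by
  have hn3 : (3:ℝ) ≤ (n:ℝ) := by exact_mod_cast hn
  set s : ℝ := Real.sqrt ((n : ℝ) * ((n : ℝ) - 1)) with hs_def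
  have hs2 : s ^ 2 = (n : ℝ) * ((n : ℝ) - 1) := Real.sq_sqrt (by nlinarith)
  have hs : 0 < s := Real.sqrt_pos.mpr (by nlinarith)
  set t : ℝ := B / s with ht_def
  have ht : 0 < t := div_pos hB hs
  have ht2 : t ^ 2 * ((n:ℝ) * ((n:ℝ) - 1)) = B ^ 2 := by
    rw [ht_def, div_pow, ← hs2]
    exact div_mul_cancel₀ _ (pow_ne_zero _ hs.ne')
  -- each μ j ≤ (n-1) t
  have hbound : ∀ j, μ j ≤ ((n:ℝ) - 1) * t := by
    intro j
    have hcs := sq_sum_le_card_mul_sum_sq (s := Finset.univ.erase j) (f := μ)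
    have hcard : ((Finset.univ.erase j).card : ℝ) = (n:ℝ) - 1 := by
      rw [Finset.card_erase_of_mem (Finset.mem_univ j), Finset.card_univ, Fintype.card_fin]
      have : (1:ℕ) ≤ n := by omega
      push_cast [Nat.cast_sub this]
      ring
    have hsum : ∑ k ∈ Finset.univ.erase j, μ k = -μ j := by
      have := Finset.add_sum_erase Finset.univ μ (Finset.mem_univ j)
      linarith [h1, this.symm]
    have hsumsq : ∑ k ∈ Finset.univ.erase j, (μ k) ^ 2 = B ^ 2 - (μ j) ^ 2 := by
      have := Finset.add_sum_erase Finset.univ (fun k => (μ k) ^ 2) (Finset.mem_univ j)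
      have h2' : μ j ^ 2 + ∑ k ∈ Finset.univ.erase j, (μ k) ^ 2 = B ^ 2 := by
        rw [this]; exact h2
      linarith
    rw [hsum, hsumsq, hcard] at hcs
    -- (μ j)^2 ≤ (n-1)(B^2 - (μ j)^2), so n (μ j)^2 ≤ (n-1) B^2 = ((n-1)t)^2 * n
    have key : (μ j) ^ 2 ≤ (((n:ℝ) - 1) * t) ^ 2 := by nlinarith
    nlinarith [sq_nonneg (μ j + ((n:ℝ)-1)*t), mul_pos (show (0:ℝ) < (n:ℝ)-1 by linarith) ht]
  -- the identity
  have hexp : ∀ j, (μ j + t) ^ 2 * (μ j - ((n:ℝ) - 1) * t)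
      = (μ j) ^ 3 + (3 - (n:ℝ)) * t * (μ j) ^ 2 + (3 - 2*(n:ℝ)) * t ^ 2 * μ j
        - ((n:ℝ) - 1) * t ^ 3 := by intro j; ring
  have hS : ∑ j, (μ j + t) ^ 2 * (μ j - ((n:ℝ) - 1) * t) = 0 := by
    have hsum : ∑ j, (μ j + t) ^ 2 * (μ j - ((n:ℝ) - 1) * t)
        = (∑ j, (μ j) ^ 3) + (3 - (n:ℝ)) * t * (∑ j, (μ j) ^ 2)
          + (3 - 2*(n:ℝ)) * t ^ 2 * (∑ j, μ j) - (n:ℝ) * (((n:ℝ) - 1) * t ^ 3) := by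
      simp only [hexp]
      rw [Finset.sum_sub_distrib, Finset.sum_add_distrib, Finset.sum_add_distrib,
        ← Finset.mul_sum, ← Finset.mul_sum, Finset.sum_const, Finset.card_univ,
        Fintype.card_fin, nsmul_eq_mul]
    have hts : t * s = B := by rw [ht_def]; field_simp
    have hB3 : B ^ 3 = t ^ 3 * ((n:ℝ) * ((n:ℝ) - 1)) * s := by
      rw [← hts, ← hs2]; ring
    have hc : ((n:ℝ) - 2) / s * B ^ 3 = ((n:ℝ) - 2) * (t ^ 3 * ((n:ℝ) * ((n:ℝ) - 1))) := by
      rw [hB3]; field_simp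
    rw [hsum, h1, h2, heq, hc, ← ht2]
    ring
  -- each term is ≤ 0, sum is 0, hence each term is 0
  have hnonpos : ∀ j ∈ Finset.univ, (μ j + t) ^ 2 * (μ j - ((n:ℝ) - 1) * t) ≤ 0 := by
    intro j _
    exact mul_nonpos_of_nonneg_of_nonpos (sq_nonneg _) (by linarith [hbound j])
  have hzero : ∀ j, (μ j + t) ^ 2 * (μ j - ((n:ℝ) - 1) * t) = 0 := by
    intro j
    have := (Finset.sum_eq_zero_iff_of_nonpos hnonpos).mp hS j (Finset.mem_univ j)
    exact this
  have hval : ∀ j, μ j = -t ∨ μ j = ((n:ℝ) - 1) * t := by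
    intro j
    rcases mul_eq_zero.mp (hzero j) with h | h
    · left; have := pow_eq_zero_iff (n := 2) (by norm_num) |>.mp h; linarith
    · right; linarith
  -- at most one j with μ j = (n-1) t
  refine ⟨-t, ?_⟩
  have hone : ∀ j₁ j₂ : Fin n, μ j₁ = ((n:ℝ)-1)*t → μ j₂ = ((n:ℝ)-1)*t → j₁ = j₂ := by
    intro j₁ j₂ hj₁ hj₂
    by_contra hne
    have hsub : ({j₁, j₂} : Finset (Fin n)) ⊆ Finset.univ := Finset.subset_univ _
    have hpair : ∑ k ∈ ({j₁, j₂} : Finset (Fin n)), (μ k) ^ 2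
        = (μ j₁) ^ 2 + (μ j₂) ^ 2 := Finset.sum_pair hne
    have hle : ∑ k ∈ ({j₁, j₂} : Finset (Fin n)), (μ k) ^ 2 ≤ ∑ k, (μ k) ^ 2 :=
      Finset.sum_le_sum_of_subset_of_nonneg hsub (fun k _ _ => sq_nonneg _)
    rw [hpair, h2, hj₁, hj₂] at hle
    -- 2 (n-1)^2 t^2 ≤ B^2 = t^2 n (n-1), contradiction since n ≥ 3
    nlinarith [sq_nonneg t, mul_pos ht ht]
  have hcompl : (Finset.univ.filter (fun i => ¬ μ i = -t)).card ≤ 1 := by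
    apply Finset.card_le_one.mpr
    intro a ha b hb
    simp only [Finset.mem_filter] at ha hb
    have ha' := (hval a).resolve_left ha.2
    have hb' := (hval b).resolve_left hb.2
    exact hone a b ha' hb'
  have hsplit := Finset.card_filter_add_card_filter_not
    (s := (Finset.univ : Finset (Fin n))) (p := fun i => μ i = -t)
  have hcardu : (Finset.univ : Finset (Fin n)).card = n := by simp
  omega

theorem okumura_equality (n : ℕ) (hn : 2 ≤ n) (μ : Fin n → ℝ) (B : ℝ) (hB : 0 ≤ B)
    (h1 : ∑ i, μ i = 0) (h2 : ∑ i, (μ i) ^ 2 = B ^ 2)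
    (heq : |∑ i, (μ i) ^ 3| = ((n : ℝ) - 2) / Real.sqrt ((n : ℝ) * ((n : ℝ) - 1)) * B ^ 3) :
    ∃ x : ℝ, n - 1 ≤ (Finset.univ.filter (fun i => μ i = x)).card := by
  rcases eq_or_lt_of_le hB with hB0 | hBpos
  · -- B = 0: all μ i = 0
    refine ⟨0, ?_⟩
    have hall : ∀ i ∈ Finset.univ, (μ i) ^ 2 = 0 := by
      intro i _
      have : ∑ i, (μ i) ^ 2 = 0 := by rw [h2, ← hB0]; ring
      exact (Finset.sum_eq_zero_iff_of_nonneg (fun i _ => sq_nonneg _)).mp this i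
        (Finset.mem_univ i)
    have : Finset.univ.filter (fun i => μ i = 0) = Finset.univ := by
      apply Finset.filter_true_of_mem
      intro i _
      exact pow_eq_zero_iff (n := 2) (by norm_num) |>.mp (hall i (Finset.mem_univ i))
    rw [this, Finset.card_univ, Fintype.card_fin]
    omega
  rcases eq_or_lt_of_le hn with hn2 | hn3
  · -- n = 2: trivial
    refine ⟨μ ⟨0, by omega⟩, ?_⟩
    have : (⟨0, by omega⟩ : Fin n) ∈ Finset.univ.filter (fun i => μ i = μ ⟨0, by omega⟩) := by
      simp
    have hpos := Finset.card_pos.mpr ⟨_, this⟩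
    omega
  have hn3' : 3 ≤ n := hn3
  have hRpos : 0 ≤ ((n : ℝ) - 2) / Real.sqrt ((n : ℝ) * ((n : ℝ) - 1)) * B ^ 3 := by
    have hn3R : (3:ℝ) ≤ (n:ℝ) := by exact_mod_cast hn3'
    exact mul_nonneg (div_nonneg (by linarith) (Real.sqrt_nonneg _))
      (pow_nonneg hBpos.le _)
  rcases abs_eq hRpos |>.mp heq with hpos | hneg
  · exact okumura_aux n hn3' μ B hBpos h1 h2 hpos
  · have h1' : ∑ i, (fun i => -μ i) i = 0 := by simp [h1]
    have h2' : ∑ i, ((fun i => -μ i) i) ^ 2 = B ^ 2 := by simp [h2]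
    have h3' : ∑ i, ((fun i => -μ i) i) ^ 3
        = ((n : ℝ) - 2) / Real.sqrt ((n : ℝ) * ((n : ℝ) - 1)) * B ^ 3 := by
      have : ∑ i, (-μ i) ^ 3 = -∑ i, (μ i) ^ 3 := by
        rw [← Finset.sum_neg_distrib]
        exact Finset.sum_congr rfl fun i _ => Odd.neg_pow ⟨1, by norm_num⟩ _
      simp only []
      rw [this, hneg]
      ring
    obtain ⟨x, hx⟩ := okumura_aux n hn3' (fun i => -μ i) B hBpos h1' h2' h3'
    refine ⟨-x, ?_⟩
    have : Finset.univ.filter (fun i => μ i = -x)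
        = Finset.univ.filter (fun i => (fun i => -μ i) i = x) := by
      apply Finset.filter_congr
      intro i _
      constructor
      · intro h; simp [h]
      · intro h; simp only [] at h; linarith
    rw [this]
    exact hx
end

section
/- Let $n \geq 3$, $c > 0$, $a \geq 0$, $b \leq \frac{2c}{n}$, and $H \in \mathbb{R}$ with $H^2 \geq \frac{4(n-1)}{n^2}c$ and $H \geq 0$. Set $\Phi = \sqrt{n(n-1)(H^2 + aH - b)}$ (well-defined since $H^2 + aH - b \geq H^2 - \frac{2c}{n} > 0$). Then $\Phi^2 - \frac{n(n-2)}{\sqrt{n(n-1)}}H\Phi + nc - nH^2 > 0$. -/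
set_option maxHeartbeats 1000000


theorem LH_positive (n : ℕ) (hn : 3 ≤ n) (c a b H : ℝ) (hc : 0 < c)
    (ha : 0 ≤ a) (hb : b ≤ 2 * c / n)
    (hH2 : H ^ 2 ≥ 4 * ((n : ℝ) - 1) / n ^ 2 * c) (hH : 0 ≤ H) :
    Real.sqrt (n * ((n : ℝ) - 1) * (H ^ 2 + a * H - b)) ^ 2 -
        (n * ((n : ℝ) - 2)) / Real.sqrt ((n : ℝ) * ((n : ℝ) - 1)) * H *
          Real.sqrt (n * ((n : ℝ) - 1) * (H ^ 2 + a * H - b)) +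
        n * c - n * H ^ 2 > 0 := by
  have hn3 : (3:ℝ) ≤ (n:ℝ) := by exact_mod_cast hn
  have hnpos : (0:ℝ) < n := by linarith
  have hb' : b * n ≤ 2 * c := by
    calc b * n ≤ (2 * c / n) * n := by nlinarith
    _ = 2 * c := by field_simp
  have hH2' : H ^ 2 * n ^ 2 ≥ 4 * ((n:ℝ) - 1) * c := by
    have h := hH2
    rw [ge_iff_le, div_mul_eq_mul_div, div_le_iff₀ (by positivity)] at h
    linarith
  have hHpos : 0 < H := by
    rcases hH.lt_or_eq with h | h
    · exact h
    · exfalso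
      have h2 := hH2'
      rw [← h] at h2
      nlinarith
  have hQpos : 0 < H ^ 2 + a * H - b := by nlinarith [mul_nonneg ha hH]
  have hnn : (0:ℝ) ≤ (n:ℝ) * ((n:ℝ) - 1) := by nlinarith
  rw [Real.sqrt_mul hnn]
  set s := Real.sqrt ((n:ℝ) * ((n:ℝ) - 1)) with hs
  set u := Real.sqrt (H ^ 2 + a * H - b) with hu
  have hs2 : s ^ 2 = (n:ℝ) * ((n:ℝ) - 1) := Real.sq_sqrt hnn
  have hspos : 0 < s := Real.sqrt_pos.mpr (by nlinarith)
  have hu2 : u ^ 2 = H ^ 2 + a * H - b := Real.sq_sqrt hQpos.le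
  have hupos : 0 < u := Real.sqrt_pos.mpr hQpos
  clear_value s u
  have hA : 0 ≤ (n:ℝ) * u ^ 2 - n * H ^ 2 + 2 * c := by
    nlinarith [mul_nonneg ha hH]
  have key : (n:ℝ) * ((n:ℝ) - 1) * u ^ 2 - (n:ℝ) * ((n:ℝ) - 2) * H * u
      + n * c - n * H ^ 2 > 0 := by
    have hlin : 0 < ((n:ℝ) - 1) * u ^ 2 + c - H ^ 2 := by
      nlinarith [mul_nonneg ha hH]
    have h1 : 0 ≤ ((n:ℝ) - 1) ^ 2 * ((n:ℝ) * u ^ 2 - n * H ^ 2 + 2 * c) ^ 2 := by positivity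
    have h2 : 0 ≤ (((n:ℝ) - 2) * ((n:ℝ) ^ 2 * H ^ 2 - 2 * ((n:ℝ) - 1) * c)) *
        ((n:ℝ) * u ^ 2 - n * H ^ 2 + 2 * c) := by
      apply mul_nonneg _ hA
      apply mul_nonneg (by linarith)
      nlinarith
    have hn2 : (0:ℝ) < (n:ℝ) - 2 := by linarith
    have h3 : 0 < ((n:ℝ) - 2) ^ 2 * c ^ 2 := by positivity
    have hid : (n:ℝ) ^ 2 * ((((n:ℝ) - 1) * u ^ 2 + c - H ^ 2) ^ 2 - (((n:ℝ) - 2) * H * u) ^ 2)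
        = ((n:ℝ) - 1) ^ 2 * ((n:ℝ) * u ^ 2 - n * H ^ 2 + 2 * c) ^ 2 +
          (((n:ℝ) - 2) * ((n:ℝ) ^ 2 * H ^ 2 - 2 * ((n:ℝ) - 1) * c)) *
            ((n:ℝ) * u ^ 2 - n * H ^ 2 + 2 * c) +
          ((n:ℝ) - 2) ^ 2 * c ^ 2 := by ring
    have hmul : 0 < (n:ℝ) ^ 2 * ((((n:ℝ) - 1) * u ^ 2 + c - H ^ 2) ^ 2
        - (((n:ℝ) - 2) * H * u) ^ 2) := by
      rw [hid]; linarith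
    have hn2pos : (0:ℝ) < (n:ℝ) ^ 2 := by positivity
    have hsq : (((n:ℝ) - 1) * u ^ 2 + c - H ^ 2) ^ 2 > (((n:ℝ) - 2) * H * u) ^ 2 := by
      have hD := (mul_pos_iff_of_pos_left hn2pos).mp hmul
      linarith
    have hR : ((n:ℝ) - 2) * H * u < ((n:ℝ) - 1) * u ^ 2 + c - H ^ 2 :=
      lt_of_pow_lt_pow_left₀ 2 hlin.le hsq
    have hstep : ((n:ℝ) - 1) * u ^ 2 - ((n:ℝ) - 2) * H * u + c - H ^ 2 > 0 := by linarith
    have hfin := mul_pos hnpos hstep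
    linarith [hfin]
  have e1 : (s * u) ^ 2 = (n:ℝ) * ((n:ℝ) - 1) * u ^ 2 := by rw [mul_pow, hs2]
  have e2 : (n:ℝ) * ((n:ℝ) - 2) / s * H * (s * u) = (n:ℝ) * ((n:ℝ) - 2) * H * u := by
    field_simp
  rw [e1, e2]
  linarith [key]
end
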